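/- For all positive integers k < n with k odd, and every nonempty subset G of the vertex set of the shift graph Sh_n^k, the independence number satisfies α(Sh_n^k[G]) ≥ (1/2 − 1/(2k))·|G|; that is, α_n^k ≥ 1/2 − 1/(2k) for odd k. -/

import Mathlib

/-- `y` is the "shift" of `x`: `x_i = y_{i+1}` for all `i ∈ {1,…,k-1}`. -/
def shiftRel (k : ℕ) (x y : Fin k → ℕ) : Prop :=
  ∀ i j : Fin k, (j : ℕ) = (i : ℕ) + 1 → x i = y j

/-- Adjacency in the shift graph `Sh_n^k`. -/
def shAdjK (k : ℕ) (x y : Fin k → ℕ) : Prop :=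
  x ≠ y ∧ (shiftRel k x y ∨ shiftRel k y x)

/-- `x` is a vertex of `Sh_n^k`: an increasing `k`-tuple with entries in `{1,…,n}`. -/
def isVertK (n k : ℕ) (x : Fin k → ℕ) : Prop :=
  StrictMono x ∧ ∀ i, 1 ≤ x i ∧ x i ≤ n

open Classical in
/-- The independence number of the subgraph of `Sh_n^k` induced on `G`. -/
noncomputable def indepNumK (k : ℕ) (G : Finset (Fin k → ℕ)) : ℕ :=
  (G.powerset.filter fun I => ∀ x ∈ I, ∀ y ∈ I, ¬ shAdjK k x y).sup Finset.card

/-- `α_n^k`: the minimum of `α(Sh_n^k[G])/|G|` over nonempty `G ⊆ V(Sh_n^k)`. -/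
noncomputable def alphaNK (n k : ℕ) : ℝ :=
  sInf {r : ℝ | ∃ G : Finset (Fin k → ℕ), G.Nonempty ∧ (∀ x ∈ G, isVertK n k x) ∧
    r = (indepNumK k G : ℝ) / G.card}

/-! ### Auxiliary machinery

We prove the bound via a probabilistic (averaging) argument: for a random
permutation `σ` of `{0,…,n}`, the set of vertices of `G` whose maximal entry
(after relabelling by `σ`) sits at a position of odd (0-based) index is an
independent set, and on average it contains a `(k-1)/(2k)` fraction of `G`. -/

/-- Embedding of the entries of a tuple into `Fin (n+1)` (via `mod`). -/
def embF (n : ℕ) {k : ℕ} (x : Fin k → ℕ) (i : Fin k) : Fin (n + 1) :=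
  ⟨x i % (n + 1), Nat.mod_lt _ (Nat.succ_pos n)⟩

lemma embF_val (n : ℕ) {k : ℕ} {x : Fin k → ℕ} (hx : isVertK n k x) (i : Fin k) :
    ((embF n x i : Fin (n + 1)) : ℕ) = x i :=
  Nat.mod_eq_of_lt (Nat.lt_succ_of_le (hx.2 i).2)

lemma embF_inj (n : ℕ) {k : ℕ} {x : Fin k → ℕ} (hx : isVertK n k x) :
    Function.Injective (embF n x) := by
  intro i i' h
  apply hx.1.injective
  have := congrArg Fin.val h
  rwa [embF_val n hx, embF_val n hx] at this

/-- The (an) index at which `σ ∘ embF n x` attains its maximum. -/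
noncomputable def Jidx (n : ℕ) {k : ℕ} (hk : 0 < k) (σ : Equiv.Perm (Fin (n + 1)))
    (x : Fin k → ℕ) : Fin k :=
  haveI : Nonempty (Fin k) := ⟨⟨0, hk⟩⟩
  Classical.choose (Finite.exists_max fun j => σ (embF n x j))

lemma Jidx_spec (n : ℕ) {k : ℕ} (hk : 0 < k) (σ : Equiv.Perm (Fin (n + 1)))
    (x : Fin k → ℕ) (i : Fin k) :
    σ (embF n x i) ≤ σ (embF n x (Jidx n hk σ x)) := by
  haveI : Nonempty (Fin k) := ⟨⟨0, hk⟩⟩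
  exact Classical.choose_spec (Finite.exists_max fun j => σ (embF n x j)) i

lemma Jidx_eq (n : ℕ) {k : ℕ} (hk : 0 < k) (σ : Equiv.Perm (Fin (n + 1)))
    {x : Fin k → ℕ} (hinj : Function.Injective (embF n x)) {j : Fin k}
    (hj : ∀ i, σ (embF n x i) ≤ σ (embF n x j)) : Jidx n hk σ x = j := by
  have h1 := Jidx_spec n hk σ x j
  have h2 := hj (Jidx n hk σ x)
  exact hinj (σ.injective (le_antisymm h2 h1))

/-- Key independence fact: two adjacent vertices cannot both have their
maximum at an odd (0-based) position, when `k` is odd. -/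
lemma key_indep (n : ℕ) {k : ℕ} (hk : 0 < k) (hodd : Odd k)
    (σ : Equiv.Perm (Fin (n + 1))) {x y : Fin k → ℕ}
    (hx : isVertK n k x) (hy : isVertK n k y) (hsh : shiftRel k x y)
    (hox : Odd ((Jidx n hk σ x : Fin k) : ℕ))
    (hoy : Odd ((Jidx n hk σ y : Fin k) : ℕ)) : False := by
  set jx := Jidx n hk σ x with hjxdef
  set jy := Jidx n hk σ y with hjydef
  have hkodd : k % 2 = 1 := Nat.odd_iff.mp hodd
  have hoxm : (jx : ℕ) % 2 = 1 := Nat.odd_iff.mp hox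
  have hoym : (jy : ℕ) % 2 = 1 := Nat.odd_iff.mp hoy
  have hxk : (jx : ℕ) < k := jx.isLt
  have hyk : (jy : ℕ) < k := jy.isLt
  have h1 : (jx : ℕ) + 1 < k := by omega
  set j1 : Fin k := ⟨(jx : ℕ) + 1, h1⟩ with hj1
  set j2 : Fin k := ⟨(jy : ℕ) - 1, by omega⟩ with hj2
  have e1 : x jx = y j1 := hsh jx j1 rfl
  have e2 : x j2 = y jy := hsh j2 jy (by show (jy : ℕ) = (jy : ℕ) - 1 + 1; omega)
  have f1 : embF n y j1 = embF n x jx :=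
    Fin.ext (by show y j1 % (n + 1) = x jx % (n + 1); rw [e1])
  have f2 : embF n x j2 = embF n y jy :=
    Fin.ext (by show x j2 % (n + 1) = y jy % (n + 1); rw [e2])
  have s1 : σ (embF n x j2) ≤ σ (embF n x jx) := Jidx_spec n hk σ x j2
  have s2 : σ (embF n y j1) ≤ σ (embF n y jy) := Jidx_spec n hk σ y j1
  rw [f2] at s1
  rw [f1] at s2
  have hv : embF n x jx = embF n y jy := σ.injective (le_antisymm s2 s1)
  have hval : x jx = y jy := by
    have := congrArg Fin.val hv
    rwa [embF_val n hx, embF_val n hy] at this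
  have hxx : x jx = x j2 := by rw [hval, ← e2]
  have hj : jx = j2 := hx.1.injective hxx
  have : (jx : ℕ) = (jy : ℕ) - 1 := congrArg Fin.val hj
  omega

/-- All fibers of `σ ↦ Jidx σ x` have the same cardinality. -/
lemma fiber_card (n : ℕ) {k : ℕ} (hk : 0 < k) {x : Fin k → ℕ}
    (hinj : Function.Injective (embF n x)) (a b : Fin k) :
    (Finset.univ.filter fun σ : Equiv.Perm (Fin (n + 1)) => Jidx n hk σ x = a).card
      = (Finset.univ.filter fun σ : Equiv.Perm (Fin (n + 1)) => Jidx n hk σ x = b).card := by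
  classical
  have step : ∀ (a b : Fin k) (σ : Equiv.Perm (Fin (n + 1))), Jidx n hk σ x = a →
      Jidx n hk (σ * Equiv.swap (embF n x a) (embF n x b)) x = b := by
    intro a b σ hσ
    have hmax : ∀ i, σ (embF n x i) ≤ σ (embF n x a) := by
      intro i
      have := Jidx_spec n hk σ x i
      rwa [hσ] at this
    apply Jidx_eq n hk _ hinj
    intro i
    have hb : (σ * Equiv.swap (embF n x a) (embF n x b)) (embF n x b)
        = σ (embF n x a) := by
      rw [Equiv.Perm.mul_apply, Equiv.swap_apply_right]
    rw [hb, Equiv.Perm.mul_apply]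
    rcases eq_or_ne (embF n x i) (embF n x a) with h1 | h1
    · rw [h1, Equiv.swap_apply_left]
      exact hmax b
    rcases eq_or_ne (embF n x i) (embF n x b) with h2 | h2
    · rw [h2, Equiv.swap_apply_right]
    · rw [Equiv.swap_apply_of_ne_of_ne h1 h2]
      exact hmax i
  apply Finset.card_bij'
    (fun σ _ => σ * Equiv.swap (embF n x a) (embF n x b))
    (fun σ _ => σ * Equiv.swap (embF n x a) (embF n x b))
  · intro σ hσ
    simp only [Finset.mem_filter, Finset.mem_univ, true_and] at hσ ⊢
    exact step a b σ hσ
  · intro σ hσ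
    simp only [Finset.mem_filter, Finset.mem_univ, true_and] at hσ ⊢
    have := step b a σ hσ
    rwa [Equiv.swap_comm (embF n x b) (embF n x a)] at this
  · intro σ _
    rw [mul_assoc, Equiv.swap_mul_self, mul_one]
  · intro σ _
    rw [mul_assoc, Equiv.swap_mul_self, mul_one]

/-- The number of odd naturals below `k`. -/
lemma card_odd_range (k : ℕ) : ((Finset.range k).filter fun m => Odd m).card = k / 2 := by
  induction k with
  | zero => simp
  | succ m ih =>
    rw [Finset.range_add_one, Finset.filter_insert]
    by_cases h : Odd m
    · rw [if_pos h, Finset.card_insert_of_notMem (by simp), ih]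
      have := Nat.odd_iff.mp h
      omega
    · rw [if_neg h, ih]
      have := Nat.even_iff.mp (Nat.not_odd_iff_even.mp h)
      omega

lemma card_odd_fin (k : ℕ) :
    ((Finset.univ : Finset (Fin k)).filter fun j => Odd ((j : Fin k) : ℕ)).card = k / 2 := by
  classical
  rw [← card_odd_range k]
  refine Finset.card_bij (fun j _ => ((j : Fin k) : ℕ)) ?_ ?_ ?_
  · intro a ha
    simp only [Finset.mem_filter, Finset.mem_univ, true_and] at ha
    simp only [Finset.mem_filter, Finset.mem_range]
    exact ⟨a.isLt, ha⟩
  · intro a _ b _ h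
    exact Fin.ext h
  · intro b hb
    simp only [Finset.mem_filter, Finset.mem_range] at hb
    exact ⟨⟨b, hb.1⟩, by simp only [Finset.mem_filter, Finset.mem_univ, true_and]; exact hb.2, rfl⟩

/-- Counting lemma: for a fixed vertex `x`, the number of permutations for which
the maximum of `x` sits at an odd position, times `2k`, equals `(k-1)` times the
total number of permutations. -/
lemma count_x (n : ℕ) {k : ℕ} (hk : 0 < k) (hodd : Odd k) {x : Fin k → ℕ}
    (hinj : Function.Injective (embF n x)) :
    (Finset.univ.filter fun σ : Equiv.Perm (Fin (n + 1)) =>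
        Odd ((Jidx n hk σ x : Fin k) : ℕ)).card * (2 * k)
      = (k - 1) * (Finset.univ : Finset (Equiv.Perm (Fin (n + 1)))).card := by
  classical
  set j0 : Fin k := ⟨0, hk⟩ with hj0
  set c := (Finset.univ.filter fun σ : Equiv.Perm (Fin (n + 1)) =>
      Jidx n hk σ x = j0).card with hc
  have hfib : ∀ j : Fin k,
      (Finset.univ.filter fun σ : Equiv.Perm (Fin (n + 1)) => Jidx n hk σ x = j).card = c :=
    fun j => fiber_card n hk hinj j j0
  have hP : (Finset.univ : Finset (Equiv.Perm (Fin (n + 1)))).card = k * c := by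
    rw [Finset.card_eq_sum_card_fiberwise
      (f := fun σ : Equiv.Perm (Fin (n + 1)) => Jidx n hk σ x)
      (t := (Finset.univ : Finset (Fin k))) (fun σ _ => Finset.mem_univ _)]
    rw [Finset.sum_congr rfl (fun j _ => hfib j)]
    simp [Finset.sum_const, Finset.card_univ, mul_comm]
  have hgood : (Finset.univ.filter fun σ : Equiv.Perm (Fin (n + 1)) =>
      Odd ((Jidx n hk σ x : Fin k) : ℕ)).card = (k / 2) * c := by
    rw [Finset.card_eq_sum_card_fiberwise
      (f := fun σ : Equiv.Perm (Fin (n + 1)) => Jidx n hk σ x)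
      (t := (Finset.univ : Finset (Fin k)).filter fun j => Odd ((j : Fin k) : ℕ))
      (fun σ hσ => by
        simp only [Finset.mem_coe, Finset.mem_filter, Finset.mem_univ, true_and] at hσ ⊢
        exact hσ)]
    have hinner : ∀ j ∈ (Finset.univ : Finset (Fin k)).filter fun j => Odd ((j : Fin k) : ℕ),
        ((Finset.univ.filter fun σ : Equiv.Perm (Fin (n + 1)) =>
          Odd ((Jidx n hk σ x : Fin k) : ℕ)).filter
            fun σ => Jidx n hk σ x = j).card = c := by
      intro j hj
      simp only [Finset.mem_filter, Finset.mem_univ, true_and] at hj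
      rw [Finset.filter_filter]
      have : ∀ σ : Equiv.Perm (Fin (n + 1)),
          (Odd ((Jidx n hk σ x : Fin k) : ℕ) ∧ Jidx n hk σ x = j) ↔ Jidx n hk σ x = j := by
        intro σ
        constructor
        · exact fun h => h.2
        · intro h
          exact ⟨by rw [h]; exact hj, h⟩
      rw [Finset.filter_congr (fun σ _ => this σ)]
      exact hfib j
    rw [Finset.sum_congr rfl hinner, Finset.sum_const, card_odd_fin, smul_eq_mul]
  have hkodd : k % 2 = 1 := Nat.odd_iff.mp hodd
  have h2 : k / 2 * 2 = k - 1 := by omega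
  calc (Finset.univ.filter fun σ : Equiv.Perm (Fin (n + 1)) =>
        Odd ((Jidx n hk σ x : Fin k) : ℕ)).card * (2 * k)
      = (k / 2) * c * (2 * k) := by rw [hgood]
    _ = (k / 2 * 2) * (k * c) := by ring
    _ = (k - 1) * (k * c) := by rw [h2]
    _ = (k - 1) * (Finset.univ : Finset (Equiv.Perm (Fin (n + 1)))).card := by rw [hP]

/-- For `0 < k < n` with `k` odd, every nonempty `G ⊆ V(Sh_n^k)` satisfies
`α(Sh_n^k[G]) ≥ (1/2 - 1/(2k))·|G|`; that is, `α_n^k ≥ 1/2 - 1/(2k)` for odd `k`. -/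
theorem indepNumK_ge_odd (k n : ℕ) (hk : 0 < k) (hodd : Odd k) (hkn : k < n) :
    (∀ G : Finset (Fin k → ℕ), G.Nonempty → (∀ x ∈ G, isVertK n k x) →
      ((1/2 : ℝ) - 1/(2 * (k : ℝ))) * G.card ≤ (indepNumK k G : ℝ)) ∧
    (1/2 : ℝ) - 1/(2 * (k : ℝ)) ≤ alphaNK n k := by
  classical
  -- the key natural-number inequality
  have key1 : ∀ G : Finset (Fin k → ℕ), (∀ x ∈ G, isVertK n k x) →
      G.card * (k - 1) ≤ 2 * k * indepNumK k G := by
    intro G hG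
    set A : Equiv.Perm (Fin (n + 1)) → Finset (Fin k → ℕ) :=
      fun σ => G.filter fun x => Odd ((Jidx n hk σ x : Fin k) : ℕ) with hA
    have hAind : ∀ σ, (A σ).card ≤ indepNumK k G := by
      intro σ
      apply Finset.le_sup (f := Finset.card)
      simp only [Finset.mem_filter, Finset.mem_powerset]
      refine ⟨Finset.filter_subset _ _, ?_⟩
      intro x hxA y hyA hadj
      have hxG := Finset.mem_filter.mp hxA
      have hyG := Finset.mem_filter.mp hyA
      rcases hadj with ⟨hne, h | h⟩
      · exact key_indep n hk hodd σ (hG x hxG.1) (hG y hyG.1) h hxG.2 hyG.2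
      · exact key_indep n hk hodd σ (hG y hyG.1) (hG x hxG.1) h hyG.2 hxG.2
    have hswap : (∑ σ : Equiv.Perm (Fin (n + 1)), (A σ).card)
        = ∑ x ∈ G, (Finset.univ.filter fun σ : Equiv.Perm (Fin (n + 1)) =>
            Odd ((Jidx n hk σ x : Fin k) : ℕ)).card := by
      simp only [hA, Finset.card_filter]
      rw [Finset.sum_comm]
    obtain ⟨σm, -, hσm⟩ := Finset.exists_max_image
      (Finset.univ : Finset (Equiv.Perm (Fin (n + 1)))) (fun σ => (A σ).card)
      Finset.univ_nonempty
    set P := (Finset.univ : Finset (Equiv.Perm (Fin (n + 1)))).card with hPdef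
    have hsum_le : (∑ σ : Equiv.Perm (Fin (n + 1)), (A σ).card) ≤ P * (A σm).card := by
      calc (∑ σ : Equiv.Perm (Fin (n + 1)), (A σ).card)
          ≤ ∑ _σ : Equiv.Perm (Fin (n + 1)), (A σm).card :=
            Finset.sum_le_sum fun σ _ => hσm σ (Finset.mem_univ σ)
        _ = P * (A σm).card := by rw [Finset.sum_const, smul_eq_mul]
    have big : P * (G.card * (k - 1)) ≤ P * (2 * k * indepNumK k G) := by
      calc P * (G.card * (k - 1)) = G.card * ((k - 1) * P) := by ring
        _ = ∑ _x ∈ G, (k - 1) * P := by rw [Finset.sum_const, smul_eq_mul]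
        _ = ∑ x ∈ G, (Finset.univ.filter fun σ : Equiv.Perm (Fin (n + 1)) =>
              Odd ((Jidx n hk σ x : Fin k) : ℕ)).card * (2 * k) :=
            Finset.sum_congr rfl fun x hx =>
              (count_x n hk hodd (embF_inj n (hG x hx))).symm
        _ = (∑ x ∈ G, (Finset.univ.filter fun σ : Equiv.Perm (Fin (n + 1)) =>
              Odd ((Jidx n hk σ x : Fin k) : ℕ)).card) * (2 * k) :=
            (Finset.sum_mul _ _ _).symm
        _ = (∑ σ : Equiv.Perm (Fin (n + 1)), (A σ).card) * (2 * k) := by rw [hswap]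
        _ ≤ (P * (A σm).card) * (2 * k) := Nat.mul_le_mul_right _ hsum_le
        _ ≤ (P * indepNumK k G) * (2 * k) :=
            Nat.mul_le_mul_right _ (Nat.mul_le_mul_left _ (hAind σm))
        _ = P * (2 * k * indepNumK k G) := by ring
    have hP0 : 0 < P := Finset.card_pos.mpr Finset.univ_nonempty
    exact Nat.le_of_mul_le_mul_left big hP0
  have hk0 : (0 : ℝ) < (k : ℝ) := by exact_mod_cast hk
  have part1 : ∀ G : Finset (Fin k → ℕ), G.Nonempty → (∀ x ∈ G, isVertK n k x) →
      ((1/2 : ℝ) - 1/(2 * (k : ℝ))) * G.card ≤ (indepNumK k G : ℝ) := by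
    intro G hGne hG
    have hnat := key1 G hG
    have hb : ((1/2 : ℝ) - 1/(2 * (k : ℝ))) = ((k : ℝ) - 1) / (2 * k) := by
      field_simp
    rw [hb, div_mul_eq_mul_div, div_le_iff₀ (by positivity)]
    have hcast : ((G.card * (k - 1) : ℕ) : ℝ) ≤ ((2 * k * indepNumK k G : ℕ) : ℝ) :=
      Nat.cast_le.mpr hnat
    push_cast [Nat.cast_sub hk] at hcast
    calc ((k : ℝ) - 1) * G.card = (G.card : ℝ) * ((k : ℝ) - 1) := by ring
      _ ≤ 2 * (k : ℝ) * (indepNumK k G : ℝ) := hcast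
      _ = (indepNumK k G : ℝ) * (2 * (k : ℝ)) := by ring
  refine ⟨part1, ?_⟩
  apply le_csInf
  · -- the set of ratios is nonempty
    refine ⟨(indepNumK k {fun i : Fin k => (i : ℕ) + 1} : ℝ)
      / ({fun i : Fin k => (i : ℕ) + 1} : Finset (Fin k → ℕ)).card,
      ⟨{fun i : Fin k => (i : ℕ) + 1}, Finset.singleton_nonempty _, ?_, rfl⟩⟩
    intro x hx
    rw [Finset.mem_singleton] at hx
    subst hx
    constructor
    · intro a b hab
      have : (a : ℕ) < (b : ℕ) := hab
      show (a : ℕ) + 1 < (b : ℕ) + 1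
      omega
    · intro i
      have := i.isLt
      constructor
      · show 1 ≤ (i : ℕ) + 1
        omega
      · show (i : ℕ) + 1 ≤ n
        omega
  · rintro r ⟨G, hGne, hG, rfl⟩
    have h1 := part1 G hGne hG
    have hc : (0 : ℝ) < (G.card : ℝ) := by
      exact_mod_cast Finset.card_pos.mpr hGne
    rw [le_div_iff₀ hc]
    exact h1
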